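/- Let q, N, m be nonnegative integers and n a nonnegative integer. Then ∫₀¹ R_{N,n}(x) R_{N,m}(x) x^{2q+1} dx = δ_{n,m} / (2(2n + N + q + 1)), where δ_{n,m} = 1 if n = m and 0 otherwise. (This is the orthogonality relation for radial Zernike polynomials in dimension p+2 with p = 2q.) -/

import Mathlib

open Finset intervalIntegral

/-- The radial Zernike polynomial `R_{N,n}` in dimension `p + 2` with `p = 2q`. -/
noncomputable def zernikeR (q N n : ℕ) (x : ℝ) : ℝ :=
  x ^ N * ∑ k ∈ Finset.range (n + 1),
    (-1 : ℝ) ^ k * (Nat.choose (n + N + q) k : ℝ) * (Nat.choose n k : ℝ) *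
      x ^ (2 * (n - k)) * (1 - x ^ 2) ^ k

open Polynomial

noncomputable def zS (a n : ℕ) : Polynomial ℝ :=
  ∑ k ∈ Finset.range (n + 1),
    C ((-1 : ℝ) ^ k * ((n + a).choose k : ℝ) * (n.choose k : ℝ)) * X ^ (n - k) * (1 - X) ^ k

lemma zS_eval (a n : ℕ) (t : ℝ) :
    (zS a n).eval t = ∑ k ∈ Finset.range (n + 1),
      (-1 : ℝ) ^ k * ((n + a).choose k : ℝ) * (n.choose k : ℝ) * t ^ (n - k) * (1 - t) ^ k := by
  simp [zS, eval_finset_sum]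

lemma one_sub_eq : (1 - X : Polynomial ℝ) = -(X - Polynomial.C 1) := by rw [neg_sub, C_1]

lemma natDegree_one_sub : (1 - X : Polynomial ℝ).natDegree = 1 := by
  rw [one_sub_eq, natDegree_neg, natDegree_X_sub_C]

lemma natDegree_zS_le (a n : ℕ) : (zS a n).natDegree ≤ n := by
  refine natDegree_sum_le_of_forall_le _ _ fun k hk => ?_
  have hk' : k ≤ n := Nat.lt_succ_iff.mp (Finset.mem_range.mp hk)
  calc (C ((-1 : ℝ) ^ k * ((n + a).choose k : ℝ) * (n.choose k : ℝ)) * X ^ (n - k) * (1 - X) ^ k).natDegree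
      ≤ (C ((-1 : ℝ) ^ k * ((n + a).choose k : ℝ) * (n.choose k : ℝ)) * X ^ (n - k)).natDegree + ((1 - X : Polynomial ℝ) ^ k).natDegree := natDegree_mul_le
    _ ≤ ((0 + (n - k)) + k * 1) := by
        gcongr
        · exact le_trans natDegree_mul_le (by rw [natDegree_C, natDegree_X_pow])
        · exact le_trans natDegree_pow_le (by rw [natDegree_one_sub])
    _ ≤ n := by omega

lemma coeff_one_sub_pow (k : ℕ) : ((1 - X : Polynomial ℝ) ^ k).coeff k = (-1) ^ k := by
  have hm : ((X - Polynomial.C (1:ℝ)) ^ k).coeff k = 1 := by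
    have := ((monic_X_sub_C (1:ℝ)).pow k).coeff_natDegree
    rwa [natDegree_pow, natDegree_X_sub_C, mul_one] at this
  rw [one_sub_eq, neg_pow, show ((-1 : Polynomial ℝ)) = C (-1) by simp, ← C_pow, coeff_C_mul, hm, mul_one]

lemma vandermonde_sum (a n : ℕ) :
    ∑ k ∈ Finset.range (n + 1), (n + a).choose k * n.choose k = (2 * n + a).choose n := by
  have h := Nat.add_choose_eq (n + a) n n
  rw [Finset.Nat.sum_antidiagonal_eq_sum_range_succ_mk] at h
  rw [show 2 * n + a = n + a + n by omega, h]
  refine Finset.sum_congr rfl fun k hk => ?_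
  have hk' : k ≤ n := Nat.lt_succ_iff.mp (Finset.mem_range.mp hk)
  rw [Nat.choose_symm hk']

lemma zS_coeff_top (a n : ℕ) : (zS a n).coeff n = ((2 * n + a).choose n : ℝ) := by
  rw [zS, finset_sum_coeff]
  have key : ∀ k ∈ Finset.range (n + 1),
      (C ((-1 : ℝ) ^ k * ((n + a).choose k : ℝ) * (n.choose k : ℝ)) * X ^ (n - k) * (1 - X) ^ k).coeff n
      = ((n + a).choose k : ℝ) * (n.choose k : ℝ) := by
    intro k hk
    have hk' : k ≤ n := Nat.lt_succ_iff.mp (Finset.mem_range.mp hk)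
    have h2 : ((X : Polynomial ℝ) ^ (n - k) * (1 - X) ^ k).coeff n = (-1) ^ k := by
      have h3 := coeff_X_pow_mul ((1 - X : Polynomial ℝ) ^ k) (n - k) k
      rw [show k + (n - k) = n by omega] at h3
      rw [h3, coeff_one_sub_pow]
    rw [mul_assoc, coeff_C_mul, h2]
    have hs : (-1 : ℝ) ^ k * (-1 : ℝ) ^ k = 1 := by
      rw [← pow_add]; exact Even.neg_one_pow ⟨k, rfl⟩
    linear_combination (((n + a).choose k : ℝ) * (n.choose k : ℝ)) * hs
  rw [Finset.sum_congr rfl key, ← vandermonde_sum a n]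
  push_cast; ring

noncomputable def zD (a n : ℕ) : Polynomial ℝ := X ^ (n + a) * (X - C 1) ^ n

lemma iterate_derivative_X_sub_one_pow (n k : ℕ) :
    derivative^[k] ((X - C 1 : Polynomial ℝ) ^ n) = C (n.descFactorial k : ℝ) * (X - C 1) ^ (n - k) := by
  induction k with
  | zero => simp
  | succ k ih =>
    rw [Function.iterate_succ_apply', ih, derivative_C_mul]
    rw [show (X - C 1 : Polynomial ℝ) = X + C (-1) by rw [map_neg, sub_eq_add_neg]]
    rw [derivative_X_add_C_pow]
    rw [Nat.descFactorial_succ, Nat.cast_mul, C_mul, show n - k - 1 = n - (k+1) by omega]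
    ring

lemma choose_descFactorial_eq (a n j : ℕ) (hj : j ≤ n) :
    n.choose j * (n + a).descFactorial (n - j) * n.descFactorial j
      = n.factorial * ((n + a).choose (n - j) * n.choose (n - j)) := by
  rw [Nat.descFactorial_eq_factorial_mul_choose, Nat.descFactorial_eq_factorial_mul_choose]
  calc n.choose j * ((n - j).factorial * (n + a).choose (n - j)) * (j.factorial * n.choose j)
      = (n.choose j * j.factorial * (n - j).factorial) * ((n + a).choose (n - j) * n.choose j) := by ring
    _ = n.factorial * ((n + a).choose (n - j) * n.choose j) := by
        rw [Nat.choose_mul_factorial_mul_factorial hj]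
    _ = _ := by rw [Nat.choose_symm hj]

lemma rodrigues (a n : ℕ) :
    derivative^[n] (zD a n) = C (n.factorial : ℝ) * (X ^ a * zS a n) := by
  rw [zD, iterate_derivative_mul, zS, Finset.mul_sum, Finset.mul_sum,
    ← Finset.sum_range_reflect]
  refine Finset.sum_congr rfl fun k hk => ?_
  have hk' : k ≤ n := Nat.lt_succ_iff.mp (Finset.mem_range.mp hk)
  rw [iterate_derivative_X_pow_eq_C_mul, iterate_derivative_X_sub_one_pow]
  rw [show n - (n + 1 - 1 - k) = k by omega, show n + a - k = a + (n - k) by omega]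
  have hcoeff := choose_descFactorial_eq a n (n - k) (by omega)
  rw [show n - (n - k) = k by omega] at hcoeff
  refine Polynomial.funext fun x => ?_
  have h1 : (-1 : ℝ) ^ k * (1 - x) ^ k = (x - 1) ^ k := by
    rw [← mul_pow]; ring_nf
  have hcR : (n.choose (n - k) : ℝ) * ((n + a).descFactorial k : ℝ) * (n.descFactorial (n - k) : ℝ)
      = (n.factorial : ℝ) * (((n + a).choose k : ℝ) * (n.choose k : ℝ)) := by
    exact_mod_cast congrArg (Nat.cast : ℕ → ℝ) hcoeff
  simp only [eval_smul, eval_mul, eval_pow, eval_C, eval_X, eval_sub, eval_one, smul_eq_mul,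
    nsmul_eq_mul, pow_add, eval_natCast, Nat.succ_sub_one]
  linear_combination (x ^ a * x ^ (n - k) * (x - 1) ^ k) * hcR
    - ((n.factorial : ℝ) * ((n + a).choose k : ℝ) * (n.choose k : ℝ) * x ^ a * x ^ (n - k)) * h1

lemma zD_deriv_eval_zero (a n k : ℕ) (hk : k < n) :
    (derivative^[k] (zD a n)).eval 0 = 0 ∧ (derivative^[k] (zD a n)).eval 1 = 0 := by
  rw [zD, iterate_derivative_mul]
  constructor <;>
  · rw [eval_finset_sum]
    refine Finset.sum_eq_zero fun j hj => ?_
    have hj' : j ≤ k := Nat.lt_succ_iff.mp (Finset.mem_range.mp hj)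
    rw [iterate_derivative_X_pow_eq_C_mul, iterate_derivative_X_sub_one_pow]
    simp only [eval_smul, eval_mul, eval_pow, eval_C, eval_X, eval_sub, eval_one, smul_eq_mul,
      nsmul_eq_mul, eval_natCast]
    first
    | (rw [zero_pow (show n + a - (k - j) ≠ 0 by omega)]; ring)
    | (rw [sub_self, zero_pow (show n - j ≠ 0 by omega)]; ring)

lemma zS_iterate_derivative_eq_zero {n m : ℕ} (h : m < n) (a : ℕ) :
    derivative^[n] (zS a m) = 0 :=
  iterate_derivative_eq_zero (lt_of_le_of_lt (natDegree_zS_le a m) h)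

lemma zS_iterate_derivative_self (a n : ℕ) :
    derivative^[n] (zS a n) = C ((n.factorial : ℝ) * ((2 * n + a).choose n : ℝ)) := by
  have hdeg : (derivative^[n] (zS a n)).natDegree ≤ 0 := by
    have := natDegree_iterate_derivative (zS a n) n
    have h2 := natDegree_zS_le a n
    omega
  rw [Polynomial.eq_C_of_natDegree_le_zero hdeg, coeff_iterate_derivative, zero_add,
    Nat.descFactorial_self, zS_coeff_top, nsmul_eq_mul]

lemma poly_intervalIntegrable (p : Polynomial ℝ) (a b : ℝ) :
    IntervalIntegrable (fun x => p.eval x) MeasureTheory.volume a b :=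
  (Polynomial.continuous p).intervalIntegrable a b

lemma ibp_iter (n : ℕ) (f : Polynomial ℝ)
    (h0 : ∀ k < n, (derivative^[k] f).eval 0 = 0) (h1 : ∀ k < n, (derivative^[k] f).eval 1 = 0) :
    ∀ g : Polynomial ℝ,
      ∫ x in (0:ℝ)..1, (derivative^[n] f).eval x * g.eval x
        = (-1 : ℝ) ^ n * ∫ x in (0:ℝ)..1, f.eval x * (derivative^[n] g).eval x := by
  induction n with
  | zero => intro g; simp
  | succ n IH =>
    intro g
    have key : ∫ x in (0:ℝ)..1, (derivative^[n+1] f).eval x * g.eval x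
        = - ∫ x in (0:ℝ)..1, (derivative^[n] f).eval x * (derivative g).eval x := by
      have hibp := intervalIntegral.integral_mul_deriv_eq_deriv_mul
        (u := fun x => g.eval x) (v := fun x => (derivative^[n] f).eval x)
        (u' := fun x => (derivative g).eval x) (v' := fun x => (derivative^[n+1] f).eval x)
        (fun x _ => Polynomial.hasDerivAt g x)
        (fun x _ => by simpa [Function.iterate_succ_apply'] using
          Polynomial.hasDerivAt (derivative^[n] f) x)
        (poly_intervalIntegrable _ 0 1) (poly_intervalIntegrable _ 0 1)
      simp only [h0 n (by omega), h1 n (by omega), mul_zero, zero_mul, sub_zero,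
        zero_sub] at hibp
      calc ∫ x in (0:ℝ)..1, (derivative^[n+1] f).eval x * g.eval x
          = ∫ x in (0:ℝ)..1, g.eval x * (derivative^[n+1] f).eval x := by
            simp_rw [mul_comm]
        _ = - ∫ x in (0:ℝ)..1, (derivative g).eval x * (derivative^[n] f).eval x := hibp
        _ = - ∫ x in (0:ℝ)..1, (derivative^[n] f).eval x * (derivative g).eval x := by
            simp_rw [mul_comm]
    rw [key, IH (fun k hk => h0 k (by omega)) (fun k hk => h1 k (by omega)) (derivative g),
      ← Function.iterate_succ_apply]
    ring

lemma betaNat (b : ℕ) : ∀ a : ℕ, ∫ x in (0:ℝ)..1, x ^ a * (1 - x) ^ b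
    = (a.factorial : ℝ) * (b.factorial : ℝ) / ((a + b + 1).factorial : ℝ) := by
  induction b with
  | zero =>
    intro a
    simp only [pow_zero, mul_one, integral_pow]
    rw [Nat.factorial_succ]
    push_cast
    rw [one_pow, zero_pow (by omega)]
    have : (a.factorial : ℝ) ≠ 0 := Nat.cast_ne_zero.mpr (Nat.factorial_ne_zero a)
    field_simp
    simp
  | succ b IH =>
    intro a
    have hibp := intervalIntegral.integral_mul_deriv_eq_deriv_mul
      (u := fun x : ℝ => (1 - x) ^ (b + 1)) (v := fun x : ℝ => x ^ (a + 1) / (a + 1))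
      (u' := fun x : ℝ => -((b + 1) * (1 - x) ^ b)) (v' := fun x : ℝ => x ^ a)
      (fun x _ => by
        have h := ((hasDerivAt_id' (x := x)).const_sub 1).pow (b + 1)
        simp only [Nat.add_sub_cancel] at h
        exact h.congr_deriv (by push_cast; ring))
      (fun x _ => by
        have h := (hasDerivAt_pow (a + 1) x).div_const ((a : ℝ) + 1)
        simp only [Nat.add_sub_cancel] at h
        have ha : ((a : ℝ) + 1) ≠ 0 := by positivity
        exact h.congr_deriv (by push_cast; field_simp))
      (((continuous_const.mul ((continuous_const.sub continuous_id).pow b)).neg).intervalIntegrable 0 1)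
      ((continuous_pow a).intervalIntegrable 0 1)
    simp only [sub_self, one_pow, zero_pow (Nat.succ_ne_zero b), zero_pow (Nat.succ_ne_zero a),
      sub_zero, zero_div, mul_zero, zero_mul, one_mul, neg_zero, zero_sub, one_div] at hibp
    have h2 : ∫ x in (0:ℝ)..1, x ^ a * (1 - x) ^ (b + 1)
        = ((b : ℝ) + 1) / ((a : ℝ) + 1) * ∫ x in (0:ℝ)..1, x ^ (a + 1) * (1 - x) ^ b := by
      calc ∫ x in (0:ℝ)..1, x ^ a * (1 - x) ^ (b + 1)
          = ∫ x in (0:ℝ)..1, (1 - x) ^ (b + 1) * x ^ a := by simp_rw [mul_comm]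
        _ = -∫ x in (0:ℝ)..1, -(((b : ℝ) + 1) * (1 - x) ^ b) * (x ^ (a + 1) / ((a : ℝ) + 1)) := by
            rw [hibp]
        _ = ∫ x in (0:ℝ)..1, ((b : ℝ) + 1) / ((a : ℝ) + 1) * (x ^ (a + 1) * (1 - x) ^ b) := by
            rw [← intervalIntegral.integral_neg]
            refine intervalIntegral.integral_congr fun x _ => ?_
            have ha : ((a : ℝ) + 1) ≠ 0 := by positivity
            field_simp
        _ = _ := intervalIntegral.integral_const_mul _ _
    rw [h2, IH (a + 1)]
    have ha : ((a : ℝ) + 1) ≠ 0 := by positivity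
    have hf1 : ((a + 1 + b + 1).factorial : ℝ) ≠ 0 := Nat.cast_ne_zero.mpr (Nat.factorial_ne_zero _)
    have hf2 : ((a + (b + 1) + 1).factorial : ℝ) ≠ 0 := Nat.cast_ne_zero.mpr (Nat.factorial_ne_zero _)
    rw [show a + 1 + b + 1 = a + (b + 1) + 1 by omega, Nat.factorial_succ (a), Nat.factorial_succ (b)]
    push_cast
    field_simp

lemma zKey (a n m : ℕ) (h : m ≤ n) :
    ∫ t in (0:ℝ)..1, t ^ a * (zS a n).eval t * (zS a m).eval t
      = if n = m then 1 / (2 * (n:ℝ) + a + 1) else 0 := by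
  have hfac : (n.factorial : ℝ) ≠ 0 := Nat.cast_ne_zero.mpr (Nat.factorial_ne_zero n)
  have step1 : ∫ t in (0:ℝ)..1, t ^ a * (zS a n).eval t * (zS a m).eval t
      = (1 / (n.factorial : ℝ)) *
        ∫ t in (0:ℝ)..1, (derivative^[n] (zD a n)).eval t * (zS a m).eval t := by
    rw [← intervalIntegral.integral_const_mul]
    refine intervalIntegral.integral_congr fun t _ => ?_
    rw [rodrigues]
    simp only [eval_mul, eval_pow, eval_C, eval_X]
    field_simp
  rw [step1, ibp_iter n (zD a n) (fun k hk => (zD_deriv_eval_zero a n k hk).1)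
    (fun k hk => (zD_deriv_eval_zero a n k hk).2) (zS a m)]
  by_cases hnm : n = m
  · subst hnm
    rw [if_pos rfl, zS_iterate_derivative_self]
    have step2 : ∫ t in (0:ℝ)..1, (zD a n).eval t *
          (C ((n.factorial : ℝ) * ((2 * n + a).choose n : ℝ))).eval t
        = ((n.factorial : ℝ) * ((2 * n + a).choose n : ℝ)) * ((-1:ℝ) ^ n *
            ∫ t in (0:ℝ)..1, t ^ (n + a) * (1 - t) ^ n) := by
      rw [← intervalIntegral.integral_const_mul, ← intervalIntegral.integral_const_mul]
      refine intervalIntegral.integral_congr fun t _ => ?_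
      simp only [zD, eval_mul, eval_pow, eval_C, eval_X, eval_sub, eval_one]
      have h1 : ((-1:ℝ)) ^ n * (1 - t) ^ n = (t - 1) ^ n := by rw [← mul_pow]; ring_nf
      linear_combination (((n.factorial : ℝ) * ((2 * n + a).choose n : ℝ)) * t ^ (n + a)) * h1.symm
    rw [step2, betaNat n (n + a)]
    have hchoose : ((2 * n + a).choose n) * n.factorial * (n + a).factorial
        = (2 * n + a).factorial := by
      have := Nat.choose_mul_factorial_mul_factorial (show n ≤ 2 * n + a by omega)
      rwa [show 2 * n + a - n = n + a by omega] at this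
    have hchR : (((2 * n + a).choose n : ℝ)) * (n.factorial : ℝ) * ((n + a).factorial : ℝ)
        = ((2 * n + a).factorial : ℝ) := by exact_mod_cast congrArg (Nat.cast : ℕ → ℝ) hchoose
    rw [show n + a + n + 1 = (2 * n + a) + 1 by omega, Nat.factorial_succ]
    have hsign : (-1 : ℝ) ^ n * (-1 : ℝ) ^ n = 1 := by
      rw [← pow_add]; exact Even.neg_one_pow ⟨n, rfl⟩
    have hf2 : ((2 * n + a).factorial : ℝ) ≠ 0 := Nat.cast_ne_zero.mpr (Nat.factorial_ne_zero _)
    have hf3 : ((n + a).factorial : ℝ) ≠ 0 := Nat.cast_ne_zero.mpr (Nat.factorial_ne_zero _)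
    have hpos : (2 * (n:ℝ) + a + 1) ≠ 0 := by positivity
    calc 1 / (n.factorial:ℝ) *
        ((-1) ^ n *
          ((n.factorial:ℝ) * (((2 * n + a).choose n :ℕ):ℝ) *
            ((-1) ^ n * (((n + a).factorial:ℝ) * (n.factorial:ℝ) /
              (((2 * n + a + 1) * (2 * n + a).factorial :ℕ):ℝ)))))
        = ((-1:ℝ) ^ n * (-1) ^ n) * (((((2 * n + a).choose n :ℕ):ℝ) * (n.factorial:ℝ) *
            ((n + a).factorial:ℝ)) * (1 / (((2 * n + a + 1) * (2 * n + a).factorial :ℕ):ℝ))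
            * ((n.factorial:ℝ) / (n.factorial:ℝ))) := by
          push_cast
          ring
      _ = 1 / (2 * (n:ℝ) + (a:ℝ) + 1) := by
          rw [hsign, hchR, div_self hfac]
          have h9 : (((2 * n + a + 1) * (2 * n + a).factorial : ℕ):ℝ)
              = (2 * (n:ℝ) + (a:ℝ) + 1) * ((2 * n + a).factorial : ℝ) := by push_cast; ring
          rw [h9]
          rw [one_mul, mul_one, one_div, mul_inv, ← mul_assoc]
          field_simp
  · have hm : m < n := lt_of_le_of_ne h (fun e => hnm e.symm)
    rw [if_neg hnm, zS_iterate_derivative_eq_zero hm a]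
    simp

lemma zKey' (a n m : ℕ) :
    ∫ t in (0:ℝ)..1, t ^ a * (zS a n).eval t * (zS a m).eval t
      = if n = m then 1 / (2 * (n:ℝ) + a + 1) else 0 := by
  rcases le_total m n with h | h
  · exact zKey a n m h
  · have h2 := zKey a m n h
    have hsymm : ∫ t in (0:ℝ)..1, t ^ a * (zS a n).eval t * (zS a m).eval t
        = ∫ t in (0:ℝ)..1, t ^ a * (zS a m).eval t * (zS a n).eval t :=
      intervalIntegral.integral_congr fun t _ => by ring
    rw [hsymm, h2]
    by_cases hnm : n = m
    · subst hnm; simp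
    · rw [if_neg hnm, if_neg (fun e => hnm e.symm)]

lemma zernikeR_eq_poly (q N n : ℕ) (x : ℝ) :
    zernikeR q N n x = x ^ N * (zS (N + q) n).eval (x ^ 2) := by
  rw [zernikeR, zS_eval]
  congr 1
  refine Finset.sum_congr rfl fun k _ => ?_
  rw [show n + N + q = n + (N + q) by omega, pow_mul]

theorem zernike_radial_orthogonality (q N n m : ℕ) :
    ∫ x in (0:ℝ)..1, zernikeR q N n x * zernikeR q N m x * x ^ (2 * q + 1)
      = (if n = m then (1:ℝ) else 0) / (2 * (2 * n + N + q + 1)) := by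
  set a := N + q with ha
  have hg : Continuous fun t : ℝ => t ^ a * (zS a n).eval t * (zS a m).eval t :=
    ((continuous_pow a).mul (Polynomial.continuous _)).mul (Polynomial.continuous _)
  have hchg := intervalIntegral.integral_comp_smul_deriv (a := (0:ℝ)) (b := 1)
    (f := fun x => x ^ 2) (f' := fun x => 2 * x)
    (g := fun t => t ^ a * (zS a n).eval t * (zS a m).eval t)
    (fun x _ => by simpa using (hasDerivAt_pow 2 x).congr_deriv (by push_cast; ring))
    ((continuous_const.mul continuous_id).continuousOn) hg
  norm_num at hchg
  have hsub : ∫ x in (0:ℝ)..1, zernikeR q N n x * zernikeR q N m x * x ^ (2 * q + 1)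
      = (1/2) * ∫ t in (0:ℝ)..1, t ^ a * (zS a n).eval t * (zS a m).eval t := by
    rw [← hchg, ← intervalIntegral.integral_const_mul]
    refine intervalIntegral.integral_congr fun x _ => ?_
    rw [zernikeR_eq_poly, zernikeR_eq_poly]
    rw [show ((x ^ 2) ^ a : ℝ) = x ^ (2 * a) from (pow_mul x 2 a).symm, ha]
    ring
  rw [hsub, zKey']
  by_cases hnm : n = m
  · rw [if_pos hnm, if_pos hnm]
    rw [ha]
    have hpos : (2 * (n:ℝ) + ↑N + ↑q + 1) ≠ 0 := by positivity
    push_cast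
    field_simp
    ring
  · rw [if_neg hnm, if_neg hnm]
    simp
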